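/- Under the map Ω ↦ Ω' = cos(θ) Ω + i⟨σ_E⟩ sin(θ) σ_S Ω with σ_S a Hermitian involution and ⟨σ_E⟩ ∈ [−1,1], the Frobenius norm satisfies ‖Ω'‖_F² = ‖Ω‖_F² (1 − δ sin²θ), where δ = 1 − ⟨σ_E⟩². -/

import Mathlib

open scoped Kronecker
open Matrix
open scoped ComplexOrder Classical

noncomputable def ptraceRight {m n : Type*} [Fintype n]
    (M : Matrix (m × n) (m × n) ℂ) : Matrix m m ℂ :=
  fun i j => ∑ k, M (i, k) (j, k)

noncomputable def ptraceLeft {m n : Type*} [Fintype m]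
    (M : Matrix (m × n) (m × n) ℂ) : Matrix n n ℂ :=
  fun i j => ∑ k, M (k, i) (k, j)

/-- von Neumann entropy in base 2: `-Tr (ρ log₂ ρ)` computed via eigenvalues. -/
noncomputable def vNE {n : Type*} [Fintype n] [DecidableEq n]
    (ρ : Matrix n n ℂ) : ℝ :=
  if h : ρ.IsHermitian then (∑ i, Real.negMulLog (h.eigenvalues i)) / Real.log 2
  else 0

def IsDensity {n : Type*} [Fintype n] (ρ : Matrix n n ℂ) : Prop :=
  ρ.PosSemidef ∧ ρ.trace = 1

/-- The positive semidefinite square root (the definition of `Matrix.PosSemidef.sqrt` in the older Mathlib). -/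
noncomputable def Matrix.PosSemidef.sqrt {𝕜 : Type*} [RCLike 𝕜] {n : Type*} [Fintype n] [DecidableEq n]
    {A : Matrix n n 𝕜} (hA : A.PosSemidef) : Matrix n n 𝕜 :=
  hA.1.eigenvectorUnitary.1 * diagonal ((↑) ∘ (√·) ∘ hA.1.eigenvalues) *
  (star hA.1.eigenvectorUnitary : Matrix n n 𝕜)

/-- Uhlmann fidelity `Tr √(√ρ σ √ρ)` (recall `√ρ` is Hermitian). -/
noncomputable def fidelity {n : Type*} [Fintype n] [DecidableEq n]
    (ρ σ : Matrix n n ℂ) : ℝ :=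
  if h : ρ.PosSemidef ∧ σ.PosSemidef then
    (((h.2.conjTranspose_mul_mul_same h.1.sqrt).sqrt).trace).re
  else 0

def σx : Matrix (Fin 2) (Fin 2) ℂ := !![0, 1; 1, 0]
def σy : Matrix (Fin 2) (Fin 2) ℂ := !![0, -Complex.I; Complex.I, 0]
def σz : Matrix (Fin 2) (Fin 2) ℂ := !![1, 0; 0, -1]

/-- `r · σ` for a real 3-vector `r`. -/
noncomputable def bloch (r : Fin 3 → ℝ) : Matrix (Fin 2) (Fin 2) ℂ :=
  r 0 • σx + r 1 • σy + r 2 • σz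

/-- Tensor product of a finite family of matrices. -/
noncomputable def tensorFamily {ι : Type*} [Fintype ι] {m : Type*}
    (M : ι → Matrix m m ℂ) : Matrix (ι → m) (ι → m) ℂ :=
  fun f g => ∏ k, M k (f k) (g k)


lemma frob_eq_trace (M : Matrix (Fin 2) (Fin 2) ℂ) :
    ∑ i, ∑ j, ‖M i j‖ ^ 2 = ((Mᴴ * M).trace).re := by
  simp only [Matrix.trace, Matrix.diag_apply, Matrix.mul_apply,
    Matrix.conjTranspose_apply, Complex.re_sum]
  rw [Finset.sum_comm]
  congr 1; ext i; congr 1; ext j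
  rw [Complex.sq_norm]
  simp [Complex.normSq_apply, Complex.mul_re, Complex.star_def]

lemma habs_aux (c d : ℂ) (A B : Matrix (Fin 2) (Fin 2) ℂ) :
    c • (c • A + -d • B) + d • (c • B + -d • A) = (c * c - d * d) • A := by
  module

/-- Under `Ω ↦ Ω' = cos(θ)Ω + i⟨σ_E⟩sin(θ) σ_S Ω` with `σ_S` a
traceless Hermitian involution and `⟨σ_E⟩ ∈ [−1,1]`,
`‖Ω'‖_F² = ‖Ω‖_F² (1 − δ sin²θ)` with `δ = 1 − ⟨σ_E⟩²`. -/
theorem stmt5 (σS : Matrix (Fin 2) (Fin 2) ℂ)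
    (hS : σS.IsHermitian) (hS2 : σS * σS = 1) (hStr : σS.trace = 0)
    (t : ℝ) (ht : t ∈ Set.Icc (-1 : ℝ) 1) (θ : ℝ)
    (Ω : Matrix (Fin 2) (Fin 2) ℂ) :
    let Ω' := (Real.cos θ : ℂ) • Ω + (Complex.I * (t : ℂ) * (Real.sin θ : ℂ)) • (σS * Ω)
    ∑ i, ∑ j, ‖Ω' i j‖ ^ 2
      = (∑ i, ∑ j, ‖Ω i j‖ ^ 2) * (1 - (1 - t ^ 2) * Real.sin θ ^ 2) := by
  intro Ω'
  have hcc : star ((Real.cos θ : ℂ)) = (Real.cos θ : ℂ) := Complex.conj_ofReal _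
  have hdd : star (Complex.I * (t : ℂ) * (Real.sin θ : ℂ))
      = -(Complex.I * (t : ℂ) * (Real.sin θ : ℂ)) := by
    simp only [Complex.star_def, _root_.map_mul, Complex.conj_ofReal, Complex.conj_I]
    ring
  have hkey : Ω'ᴴ * Ω' =
      ((Real.cos θ ^ 2 + t ^ 2 * Real.sin θ ^ 2 : ℝ) : ℂ) • (Ωᴴ * Ω) := by
    have hc : Ω'ᴴ = (Real.cos θ : ℂ) • Ωᴴ
        + (-(Complex.I * (t : ℂ) * (Real.sin θ : ℂ))) • (Ωᴴ * σS) := by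
      show ((Real.cos θ : ℂ) • Ω + (Complex.I * (t : ℂ) * (Real.sin θ : ℂ)) • (σS * Ω))ᴴ = _
      rw [Matrix.conjTranspose_add, Matrix.conjTranspose_smul,
        Matrix.conjTranspose_smul, Matrix.conjTranspose_mul, hS.eq, hcc, hdd]
    rw [hc]
    simp only [Ω', Matrix.add_mul, Matrix.mul_add, Matrix.smul_mul,
      Matrix.mul_smul, Matrix.mul_assoc]
    have h2 : σS * (σS * Ω) = Ω := by rw [← Matrix.mul_assoc, hS2, Matrix.one_mul]
    rw [h2, habs_aux]
    congr 1
    simp only [Complex.ofReal_add, Complex.ofReal_mul, Complex.ofReal_pow]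
    linear_combination (-(t : ℂ) ^ 2 * ((Real.sin θ : ℂ)) ^ 2) * Complex.I_sq
  rw [frob_eq_trace, frob_eq_trace, hkey, Matrix.trace_smul]
  simp only [smul_eq_mul, Complex.mul_re, Complex.ofReal_re, Complex.ofReal_im,
    zero_mul, sub_zero]
  rw [Real.cos_sq']
  ring
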